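/- arXiv:1707.08399 — 2 statements merged into one kernel-verified Lean document; each statement's English description precedes it below -/
import Mathlib

section
/- Let p ∈ (1,∞) and let D : c₀₀ → c₀₀ be the linear map defined coordinatewise by: for each n ≥ 1, (D x)_{2^{n-1}} = Σ_{j∈M_n} x_j and (D x)_j = 0 for j ∈ M_n with j ≠ 2^{n-1}, where M_n = [2^{n-1}, 2^n) ∩ ℕ (i.e., D acts on each block M_n as the rank-one summation operator onto the first coordinate of the block). Then D is not bounded with respect to the Baernstein norm: for every constant C > 0 there exists x ∈ c₀₀ with ‖D x‖_{B_p} > C · ‖x‖_{B_p}. -/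
/-- A non-empty finite subset `M` of `ℕ = {1,2,...}` is admissible if `|M| ≤ min M`,
i.e. `M` is non-empty and its cardinality is at most every element of `M`. -/
def Admissible (M : Finset ℕ) : Prop := M.Nonempty ∧ ∀ k ∈ M, M.card ≤ k

/-- `μ(x, N) = ∑_{n ∈ N} |x_n|`. -/
def mu (x : ℕ → ℝ) (N : Finset ℕ) : ℝ := ∑ n ∈ N, |x n|

/-- `N₁ < N₂ < ⋯ < N_k`: every element of `N i` is smaller than every element of `N j`
whenever `i < j`. -/
def SepChain {k : ℕ} (N : Fin k → Finset ℕ) : Prop :=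
  ∀ i j : Fin k, i < j → ∀ a ∈ N i, ∀ b ∈ N j, a < b

/-- The Baernstein norm
`‖x‖_{B_p} = sup { ν_p(x; N₁,…,N_k) : k ≥ 1, N₁ < ⋯ < N_k admissible }`, where
`ν_p(x; N₁,…,N_k) = (∑_j μ(x,N_j)^p)^{1/p}`. -/
noncomputable def BpNorm (p : ℝ) (x : ℕ → ℝ) : ℝ :=
  sSup { t : ℝ | ∃ (k : ℕ) (N : Fin k → Finset ℕ), 0 < k ∧ (∀ j, Admissible (N j)) ∧
    SepChain N ∧ t = (∑ j, (mu x (N j)) ^ p) ^ (1 / p) }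

/-- The block `M_n = [2^{n-1}, 2^n) ∩ ℕ`. -/
def Mblock (n : ℕ) : Finset ℕ := Finset.Ico (2 ^ (n - 1)) (2 ^ n)

/-- `uep(N) = { 2^k − 1 : k ≥ 1, N ∩ M_k ≠ ∅ }`, the set of upper end points of the
blocks `M_k` that `N` intersects. -/
def uep (N : Finset ℕ) : Finset ℕ :=
  ((Finset.range (N.sup id + 2)).filter fun k => 1 ≤ k ∧ (N ∩ Mblock k).Nonempty).image
    fun k => 2 ^ k - 1

/-- The diagonal operator `Δ(y) = ∑_{n=1}^K y_{2^n−1} · x_n`. -/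
def DeltaOp (K : ℕ) (x : ℕ → ℕ → ℝ) (y : ℕ → ℝ) : ℕ → ℝ :=
  fun j => ∑ n ∈ Finset.Icc 1 K, y (2 ^ n - 1) * x n j


lemma mu_nonneg (x : ℕ → ℝ) (N : Finset ℕ) : 0 ≤ mu x N :=
  Finset.sum_nonneg fun _ _ => abs_nonneg _

lemma key (p : ℝ) (hp : 1 < p) (y : ℕ → ℝ) (B T : ℝ) (hB : 0 ≤ B)
    (hmu : ∀ N : Finset ℕ, Admissible N → mu y N ≤ B)
    (hsum : ∀ U : Finset ℕ, (∀ n ∈ U, 1 ≤ n) → ∑ n ∈ U, |y n| ≤ T) :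
    ∀ t ∈ { t : ℝ | ∃ (k : ℕ) (N : Fin k → Finset ℕ), 0 < k ∧ (∀ j, Admissible (N j)) ∧
      SepChain N ∧ t = (∑ j, (mu y (N j)) ^ p) ^ (1 / p) },
      t ≤ (B ^ (p - 1) * T) ^ (1 / p) := by
  rintro t ⟨k, N, hk, hadm, hsep, rfl⟩
  have hp0 : (0:ℝ) < p := lt_trans one_pos hp
  have h1 : ∀ j, (mu y (N j)) ^ p ≤ B ^ (p - 1) * mu y (N j) := by
    intro j
    have h0 := mu_nonneg y (N j)
    rcases eq_or_lt_of_le h0 with h | h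
    · rw [← h, Real.zero_rpow (ne_of_gt hp0), mul_zero]
    · have : (mu y (N j)) ^ p = (mu y (N j)) ^ (p - 1) * mu y (N j) := by
        rw [show p = (p - 1) + 1 by ring, Real.rpow_add h, Real.rpow_one, sub_add_cancel]
      rw [this]
      apply mul_le_mul_of_nonneg_right _ h0
      exact Real.rpow_le_rpow h0 (hmu _ (hadm j)) (by linarith)
  have hdisj : (↑(Finset.univ : Finset (Fin k)) : Set (Fin k)).PairwiseDisjoint N := by
    intro i _ j _ hij
    rcases lt_or_gt_of_ne hij with h | h
    · exact Finset.disjoint_left.2 fun a ha ha' => lt_irrefl a (hsep i j h a ha a ha')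
    · exact Finset.disjoint_left.2 fun a ha ha' => lt_irrefl a (hsep j i h a ha' a ha)
  have h2 : ∑ j, mu y (N j) ≤ T := by
    rw [show ∑ j, mu y (N j) = ∑ j ∈ Finset.univ.biUnion N, |y j| from
      (Finset.sum_biUnion hdisj).symm]
    apply hsum
    intro n hn
    rw [Finset.mem_biUnion] at hn
    obtain ⟨j, _, hj⟩ := hn
    obtain ⟨hne, hcard⟩ := hadm j
    exact le_trans (Finset.card_pos.2 hne) (hcard n hj)
  have h3 : ∑ j, (mu y (N j)) ^ p ≤ B ^ (p - 1) * T := by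
    calc ∑ j, (mu y (N j)) ^ p ≤ ∑ j, B ^ (p - 1) * mu y (N j) :=
          Finset.sum_le_sum fun j _ => h1 j
      _ = B ^ (p - 1) * ∑ j, mu y (N j) := by rw [Finset.mul_sum]
      _ ≤ B ^ (p - 1) * T := by
          apply mul_le_mul_of_nonneg_left h2 (Real.rpow_nonneg hB _)
  exact Real.rpow_le_rpow (Finset.sum_nonneg fun j _ => Real.rpow_nonneg (mu_nonneg y _) _)
    h3 (by positivity)

lemma logblock {m j : ℕ} (h1 : 2 ^ m ≤ j) (h2 : j < 2 ^ (m + 1)) : Nat.log 2 j = m :=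
  Nat.log_eq_of_pow_le_of_lt_pow h1 h2

lemma sumg (K : ℕ) : ∑ j ∈ Finset.Ico 1 (2 ^ K), ((2:ℝ) ^ (Nat.log 2 j))⁻¹ = K := by
  induction K with
  | zero => simp
  | succ K ih =>
    have h1 : (1:ℕ) ≤ 2 ^ K := Nat.one_le_two_pow
    have h2 : (2:ℕ) ^ K ≤ 2 ^ (K + 1) := Nat.pow_le_pow_right (by norm_num) (Nat.le_succ K)
    rw [← Finset.sum_Ico_consecutive _ h1 h2, ih]
    have : ∑ j ∈ Finset.Ico (2 ^ K) (2 ^ (K + 1)), ((2:ℝ) ^ (Nat.log 2 j))⁻¹ = 1 := by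
      have hc : ∀ j ∈ Finset.Ico (2 ^ K) (2 ^ (K + 1)),
          ((2:ℝ) ^ (Nat.log 2 j))⁻¹ = ((2:ℝ) ^ K)⁻¹ := by
        intro j hj
        rw [Finset.mem_Ico] at hj
        rw [logblock hj.1 hj.2]
      rw [Finset.sum_congr rfl hc, Finset.sum_const, Nat.card_Ico]
      have : (2:ℕ) ^ (K + 1) - 2 ^ K = 2 ^ K := by
        rw [pow_succ]; omega
      rw [this, nsmul_eq_mul]
      push_cast
      rw [mul_inv_cancel₀ (by positivity : ((2:ℝ) ^ K) ≠ 0)]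
    rw [this]
    push_cast
    ring

/-- The witness sequence: `xx K j = 2^{-(n-1)}` for `j ∈ M_n`, `1 ≤ n ≤ K`, else 0. -/
noncomputable def xx (K : ℕ) : ℕ → ℝ :=
  fun j => if j ∈ Finset.Ico 1 (2 ^ K) then ((2:ℝ) ^ (Nat.log 2 j))⁻¹ else 0

lemma xx_nonneg (K j : ℕ) : 0 ≤ xx K j := by
  unfold xx; split <;> positivity

lemma xx_abs (K j : ℕ) : |xx K j| = xx K j := abs_of_nonneg (xx_nonneg K j)

lemma xx_supp (K : ℕ) : (Function.support (xx K)).Finite := by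
  apply Set.Finite.subset (Finset.Ico 1 (2 ^ K)).finite_toSet
  intro j hj
  simp only [Function.mem_support, xx] at hj
  by_contra h
  simp only [Finset.coe_Ico, Set.mem_Ico] at h
  rw [if_neg (by simpa [Finset.mem_Ico] using h)] at hj
  exact hj rfl

lemma xx_le (K j : ℕ) (hj : 1 ≤ j) : xx K j ≤ 2 / j := by
  have hj' : (0:ℝ) < j := by exact_mod_cast hj
  unfold xx
  split
  · have h := Nat.lt_pow_succ_log_self (by norm_num : 1 < 2) j
    have h' : (j:ℝ) < 2 ^ (Nat.log 2 j + 1) := by exact_mod_cast h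
    rw [pow_succ, mul_comm] at h'
    rw [inv_eq_one_div, div_le_div_iff₀ (by positivity) hj']
    nlinarith [pow_pos (by norm_num : (0:ℝ) < 2) (Nat.log 2 j)]
  · positivity

lemma xx_mu (K : ℕ) (N : Finset ℕ) (hN : Admissible N) : mu (xx K) N ≤ 2 := by
  obtain ⟨hne, hcard⟩ := hN
  have hc : 0 < N.card := Finset.card_pos.2 hne
  have hc' : (0:ℝ) < N.card := by exact_mod_cast hc
  have : ∀ j ∈ N, |xx K j| ≤ 2 / N.card := by
    intro j hj
    rw [xx_abs]
    refine le_trans (xx_le K j (le_trans hc (hcard j hj))) ?_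
    apply div_le_div_of_nonneg_left (by norm_num) hc'
    exact_mod_cast hcard j hj
  calc mu (xx K) N ≤ ∑ _j ∈ N, (2 / N.card : ℝ) := Finset.sum_le_sum this
    _ = N.card * (2 / N.card) := by rw [Finset.sum_const, nsmul_eq_mul]
    _ = 2 := by field_simp

lemma xx_sum (K : ℕ) (U : Finset ℕ) : ∑ n ∈ U, |xx K n| ≤ K := by
  have h1 : ∑ n ∈ U, |xx K n| ≤ ∑ n ∈ U ∪ Finset.Ico 1 (2 ^ K), |xx K n| :=
    Finset.sum_le_sum_of_subset_of_nonneg Finset.subset_union_left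
      (fun _ _ _ => abs_nonneg _)
  have h2 : ∑ n ∈ U ∪ Finset.Ico 1 (2 ^ K), |xx K n| = ∑ n ∈ Finset.Ico 1 (2 ^ K), |xx K n| := by
    apply (Finset.sum_subset Finset.subset_union_right ?_).symm
    intro j _ hj
    rw [xx_abs]
    unfold xx
    rw [if_neg hj]
  have h3 : ∑ n ∈ Finset.Ico 1 (2 ^ K), |xx K n| = K := by
    rw [← sumg K]
    apply Finset.sum_congr rfl
    intro j hj
    rw [xx_abs]
    unfold xx
    rw [if_pos hj]
  rw [h2, h3] at h1
  exact h1

lemma xx_block (K n : ℕ) (h1 : 1 ≤ n) (h2 : n ≤ K) : ∑ j ∈ Mblock n, xx K j = 1 := by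
  have hsub : ∀ j ∈ Mblock n, xx K j = ((2:ℝ) ^ (n - 1))⁻¹ := by
    intro j hj
    rw [Mblock, Finset.mem_Ico] at hj
    have hj1 : 1 ≤ j := le_trans Nat.one_le_two_pow hj.1
    have hjK : j < 2 ^ K := lt_of_lt_of_le hj.2 (Nat.pow_le_pow_right (by norm_num) h2)
    have hlog : Nat.log 2 j = n - 1 := by
      apply logblock hj.1
      have hn : n - 1 + 1 = n := Nat.succ_pred_eq_of_pos h1
      rw [hn]
      exact hj.2
    unfold xx
    rw [if_pos (Finset.mem_Ico.2 ⟨hj1, hjK⟩), hlog]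
  rw [Finset.sum_congr rfl hsub, Finset.sum_const, Mblock, Nat.card_Ico, nsmul_eq_mul]
  have hcard : (2:ℕ) ^ n - 2 ^ (n - 1) = 2 ^ (n - 1) := by
    have hn : n - 1 + 1 = n := Nat.succ_pred_eq_of_pos h1
    have h2n : (2:ℕ) ^ n = 2 ^ (n - 1) * 2 := by rw [← pow_succ, hn]
    omega
  rw [hcard]
  push_cast
  rw [mul_inv_cancel₀ (by positivity : ((2:ℝ) ^ (n-1)) ≠ 0)]


/-- Let `p ∈ (1,∞)` and let `D` be the linear map defined coordinatewise by: for each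
`n ≥ 1`, `(Dx)_{2^{n-1}} = ∑_{j∈M_n} x_j` and `(Dx)_j = 0` for `j ∈ M_n`, `j ≠ 2^{n-1}`
(the rank-one summation operator onto the first coordinate of each block
`M_n = [2^{n-1}, 2^n) ∩ ℕ`).  Then `D` is not bounded with respect to the Baernstein norm:
for every `C > 0` there is a finitely supported `x` with `‖Dx‖_{B_p} > C‖x‖_{B_p}`. -/
theorem stmt_15 (p : ℝ) (hp : 1 < p) (D : (ℕ → ℝ) →ₗ[ℝ] (ℕ → ℝ))
    (hD : ∀ (x : ℕ → ℝ) (n : ℕ), 1 ≤ n →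
      D x (2 ^ (n - 1)) = (∑ j ∈ Mblock n, x j) ∧
      ∀ j ∈ Mblock n, j ≠ 2 ^ (n - 1) → D x j = 0) :
    ∀ C : ℝ, 0 < C → ∃ x : ℕ → ℝ,
      (Function.support x).Finite ∧ C * BpNorm p x < BpNorm p (D x) := by
  intro C hC
  have hp0 : (0:ℝ) < p := lt_trans one_pos hp
  have hppos : (0:ℝ) < 1 / p := by positivity
  -- choose s
  have hq : (1:ℝ) < (2:ℝ) ^ (1 - 1/p) := by
    have h1 : (0:ℝ) < 1 - 1/p := by
      rw [sub_pos, div_lt_one hp0]; exact hp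
    calc (1:ℝ) = (2:ℝ) ^ (0:ℝ) := (Real.rpow_zero 2).symm
      _ < 2 ^ (1 - 1/p) := Real.rpow_lt_rpow_of_exponent_lt (by norm_num) h1
  obtain ⟨s, hs1, hs⟩ : ∃ s : ℕ, 1 ≤ s ∧ 4 * C < ((2:ℝ) ^ (1 - 1/p)) ^ s := by
    obtain ⟨s₀, hs₀⟩ := pow_unbounded_of_one_lt (4 * C) hq
    exact ⟨s₀ + 1, Nat.le_add_left 1 s₀,
      lt_of_lt_of_le hs₀ (pow_le_pow_right₀ (le_of_lt hq) (Nat.le_succ s₀))⟩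
  obtain ⟨K, hK_def⟩ : ∃ K : ℕ, K = 2 ^ s := ⟨_, rfl⟩
  obtain ⟨m, hm_def⟩ : ∃ m : ℕ, m = s + 1 := ⟨_, rfl⟩
  have hmK : m ≤ K := by
    have h := Nat.lt_two_pow_self (n := s)
    omega
  obtain ⟨x, hx_def⟩ : ∃ x : ℕ → ℝ, x = xx K := ⟨_, rfl⟩
  refine ⟨x, hx_def ▸ xx_supp K, ?_⟩
  -- values of D x
  have hDx_at : ∀ n, 1 ≤ n → n ≤ K → D x (2 ^ (n - 1)) = 1 := by
    intro n h1 h2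
    rw [(hD x n h1).1, hx_def]
    exact xx_block K n h1 h2
  obtain ⟨P, hP_def⟩ : ∃ P : Finset ℕ, P = (Finset.Icc 1 K).image (fun n => 2 ^ (n - 1)) :=
    ⟨_, rfl⟩
  have hDx_gen : ∀ j, 1 ≤ j → |D x j| ≤ (if j ∈ P then (1:ℝ) else 0) := by
    intro j hj
    obtain ⟨n, hn_def⟩ : ∃ n : ℕ, n = Nat.log 2 j + 1 := ⟨_, rfl⟩
    have hn1 : 1 ≤ n := by omega
    have hjmem : j ∈ Mblock n := by
      rw [Mblock, Finset.mem_Ico, hn_def]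
      constructor
      · simpa using Nat.pow_log_le_self 2 (by omega : j ≠ 0)
      · simpa using Nat.lt_pow_succ_log_self (by norm_num : 1 < 2) j
    by_cases hje : j = 2 ^ (n - 1)
    · subst hje
      rw [(hD x n hn1).1]
      by_cases hnK : n ≤ K
      · rw [hx_def, xx_block K n hn1 hnK]
        have : (2:ℕ) ^ (n - 1) ∈ P := by
          rw [hP_def, Finset.mem_image]
          exact ⟨n, Finset.mem_Icc.2 ⟨hn1, hnK⟩, rfl⟩
        rw [if_pos this, abs_one]
      · have hzero : ∑ j' ∈ Mblock n, x j' = 0 := by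
          apply Finset.sum_eq_zero
          intro j' hj'
          rw [Mblock, Finset.mem_Ico] at hj'
          have hge : 2 ^ K ≤ j' := by
            calc 2 ^ K ≤ 2 ^ (n - 1) := Nat.pow_le_pow_right (by norm_num) (by omega)
              _ ≤ j' := hj'.1
          rw [hx_def]
          unfold xx
          rw [if_neg (by simp [Finset.mem_Ico]; omega)]
        rw [hzero, abs_zero]
        split <;> norm_num
    · rw [(hD x n hn1).2 j hjmem hje, abs_zero]
      split <;> norm_num
  -- ℓ¹ bound for D x
  have hsumDx : ∀ U : Finset ℕ, (∀ n ∈ U, 1 ≤ n) → ∑ n ∈ U, |D x n| ≤ (K:ℝ) := by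
    intro U hU
    calc ∑ n ∈ U, |D x n| ≤ ∑ n ∈ U, (if n ∈ P then (1:ℝ) else 0) :=
          Finset.sum_le_sum fun n hn => hDx_gen n (hU n hn)
      _ = ((U ∩ P).card : ℝ) := by
          rw [Finset.sum_ite_mem, Finset.sum_const, nsmul_eq_mul, mul_one]
      _ ≤ (K:ℝ) := by
          have h1 : (U ∩ P).card ≤ P.card :=
            Finset.card_le_card Finset.inter_subset_right
          have h2 : P.card ≤ K := by
            calc P.card ≤ (Finset.Icc 1 K).card := hP_def ▸ Finset.card_image_le
              _ = K := by rw [Nat.card_Icc]; omega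
          exact_mod_cast le_trans h1 h2
  have hmuDx : ∀ N : Finset ℕ, Admissible N → mu (D x) N ≤ (K:ℝ) := by
    intro N ⟨hne, hcard⟩
    exact hsumDx N fun n hn => le_trans (Finset.card_pos.2 hne) (hcard n hn)
  -- lower bound for BpNorm (D x)
  obtain ⟨r, hr_def⟩ : ∃ r : ℕ, r = 2 ^ s - s := ⟨_, rfl⟩
  have h2s : (2:ℕ) ^ s = 2 ^ (s - 1) * 2 := by
    rw [← pow_succ]
    congr 1
    omega
  have hr1 : 2 ^ (s - 1) ≤ r := by
    have h1 : s - 1 < 2 ^ (s - 1) := Nat.lt_two_pow_self (n := s - 1)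
    omega
  obtain ⟨N₀, hN₀_def⟩ : ∃ N₀ : Finset ℕ,
      N₀ = (Finset.Icc m K).image (fun n => 2 ^ (n - 1)) := ⟨_, rfl⟩
  have hinj : ∀ a ∈ Finset.Icc m K, ∀ b ∈ Finset.Icc m K,
      2 ^ (a - 1) = 2 ^ (b - 1) → a = b := by
    intro a ha b hb hab
    rw [Finset.mem_Icc] at ha hb
    have := Nat.pow_right_injective (le_refl 2) hab
    omega
  have hcardN₀ : N₀.card = r := by
    rw [hN₀_def, Finset.card_image_of_injOn hinj, Nat.card_Icc]
    omega
  have hadmN₀ : Admissible N₀ := by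
    constructor
    · rw [hN₀_def]
      exact Finset.Nonempty.image (Finset.nonempty_Icc.2 hmK) _
    · intro k hk
      rw [hN₀_def, Finset.mem_image] at hk
      obtain ⟨n, hn, rfl⟩ := hk
      rw [Finset.mem_Icc] at hn
      have : (2:ℕ) ^ s ≤ 2 ^ (n - 1) := Nat.pow_le_pow_right (by norm_num) (by omega)
      rw [hcardN₀]
      omega
  have hmuN₀ : mu (D x) N₀ = (r:ℝ) := by
    rw [mu, hN₀_def, Finset.sum_image hinj]
    have hone : ∀ n ∈ Finset.Icc m K, |D x (2 ^ (n - 1))| = 1 := by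
      intro n hn
      rw [Finset.mem_Icc] at hn
      rw [hDx_at n (by omega) hn.2, abs_one]
    rw [Finset.sum_congr rfl hone, Finset.sum_const, nsmul_eq_mul, mul_one, Nat.card_Icc]
    congr 1
    omega
  have hrmem : (r:ℝ) ∈ { t : ℝ | ∃ (k : ℕ) (N : Fin k → Finset ℕ), 0 < k ∧
      (∀ j, Admissible (N j)) ∧ SepChain N ∧ t = (∑ j, (mu (D x) (N j)) ^ p) ^ (1 / p) } := by
    refine ⟨1, fun _ => N₀, one_pos, fun _ => hadmN₀, ?_, ?_⟩
    · intro i j hij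
      have : i = j := Subsingleton.elim i j
      rw [this] at hij
      exact absurd hij (lt_irrefl j)
    · rw [Fin.sum_univ_one, hmuN₀, ← Real.rpow_mul (Nat.cast_nonneg r),
        mul_one_div_cancel (ne_of_gt hp0), Real.rpow_one]
  have hbddDx : BddAbove { t : ℝ | ∃ (k : ℕ) (N : Fin k → Finset ℕ), 0 < k ∧
      (∀ j, Admissible (N j)) ∧ SepChain N ∧ t = (∑ j, (mu (D x) (N j)) ^ p) ^ (1 / p) } :=
    ⟨((K:ℝ) ^ (p - 1) * K) ^ (1 / p),
      key p hp (D x) K K (Nat.cast_nonneg K) hmuDx hsumDx⟩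
  have hlow : (r:ℝ) ≤ BpNorm p (D x) := le_csSup hbddDx hrmem
  -- upper bound for BpNorm x
  have hup : BpNorm p x ≤ ((2:ℝ) ^ (p - 1) * K) ^ (1 / p) := by
    apply Real.sSup_le
    · exact hx_def ▸ key p hp (xx K) 2 K (by norm_num) (xx_mu K) (fun U _ => xx_sum K U)
    · positivity
  -- arithmetic
  have harith : C * (((2:ℝ) ^ (p - 1) * K) ^ (1 / p)) < (r:ℝ) := by
    obtain ⟨u, hu_def⟩ : ∃ u : ℝ, u = (2:ℝ) ^ ((s:ℝ) * (1 / p)) := ⟨_, rfl⟩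
    have hu0 : 0 < u := hu_def ▸ Real.rpow_pos_of_pos (by norm_num) _
    have hKr : (K:ℝ) = (2:ℝ) ^ (s:ℝ) := by
      rw [hK_def]
      push_cast
      rw [← Real.rpow_natCast 2 s]
    have hb : ((2:ℝ) ^ (p - 1) * K) ^ (1 / p) ≤ 2 * u := by
      rw [hKr, ← Real.rpow_add (by norm_num), ← Real.rpow_mul (by norm_num)]
      have he : (p - 1 + (s:ℝ)) * (1 / p) = (1 - 1/p) + (s:ℝ) * (1 / p) := by
        field_simp
      rw [he, Real.rpow_add (by norm_num), hu_def]
      apply mul_le_mul_of_nonneg_right _ (le_of_lt (Real.rpow_pos_of_pos (by norm_num) _))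
      calc (2:ℝ) ^ (1 - 1/p) ≤ (2:ℝ) ^ (1:ℝ) :=
            Real.rpow_le_rpow_of_exponent_le (by norm_num) (by linarith)
        _ = 2 := Real.rpow_one 2
    have hs' : 4 * C < (2:ℝ) ^ ((s:ℝ) * (1 - 1/p)) := by
      rw [mul_comm (s:ℝ)]
      rwa [← Real.rpow_natCast ((2:ℝ) ^ (1 - 1/p)) s,
        ← Real.rpow_mul (by norm_num : (0:ℝ) ≤ 2)] at hs
    have hsplit : (2:ℝ) ^ ((s:ℝ) * (1 - 1/p)) * u = (K:ℝ) := by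
      rw [hu_def, hKr, ← Real.rpow_add (by norm_num)]
      congr 1
      ring
    have h4Cu : 4 * C * u < (K:ℝ) := by
      rw [← hsplit]
      exact mul_lt_mul_of_pos_right hs' hu0
    have hKle : (K:ℝ) ≤ 2 * r := by
      have : K ≤ 2 * r := by omega
      exact_mod_cast this
    calc C * (((2:ℝ) ^ (p - 1) * K) ^ (1 / p)) ≤ C * (2 * u) :=
          mul_le_mul_of_nonneg_left hb (le_of_lt hC)
      _ < (r:ℝ) := by nlinarith
  calc C * BpNorm p x ≤ C * (((2:ℝ) ^ (p - 1) * K) ^ (1 / p)) :=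
        mul_le_mul_of_nonneg_left hup (le_of_lt hC)
    _ < (r:ℝ) := harith
    _ ≤ BpNorm p (D x) := hlow
end

section
/- Let p ∈ (1,∞), let q ≥ 3 be a natural number, set y_{q,2q} = Σ_{n=q}^{2q} (1/n) x_n where x_n = 2^{-(n-1)} Σ_{j=2^{n-1}}^{2^n − 1} b_j, and let D : c₀₀ → c₀₀ be the map acting on each block M_n = [2^{n-1}, 2^n) ∩ ℕ as summation onto the first coordinate, i.e., (D x)_{2^{n-1}} = Σ_{j∈M_n} x_j and (D x)_j = 0 for j ∈ M_n, j ≠ 2^{n-1}. Then the set N = { 2^{n-1} : q ≤ n ≤ 2q } is admissible, and ‖D y_{q,2q}‖_{B_p} = Σ_{n=q}^{2q} 1/n > 1/2. -/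
lemma mblock_unique {n m j : ℕ} (hn : 1 ≤ n) (hm : 1 ≤ m)
    (h1 : j ∈ Mblock n) (h2 : j ∈ Mblock m) : n = m := by
  simp only [Mblock, Finset.mem_Ico] at h1 h2
  by_contra hne
  rcases Nat.lt_or_ge n m with h | h
  · have : (2:ℕ)^n ≤ 2^(m-1) := Nat.pow_le_pow_right (by norm_num) (by omega)
    omega
  · have : (2:ℕ)^m ≤ 2^(n-1) := Nat.pow_le_pow_right (by norm_num) (by omega)
    omega

lemma mem_mblock_log {j : ℕ} (hj : 1 ≤ j) : j ∈ Mblock (Nat.log 2 j + 1) := by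
  simp only [Mblock, Finset.mem_Ico, Nat.add_sub_cancel]
  exact ⟨Nat.pow_log_le_self 2 (by omega), Nat.lt_pow_succ_log_self (by norm_num) j⟩

lemma pow_self_mem_mblock {n : ℕ} (hn : 1 ≤ n) : 2 ^ (n-1) ∈ Mblock n := by
  simp only [Mblock, Finset.mem_Ico]
  exact ⟨le_refl _, Nat.pow_lt_pow_right (by norm_num) (by omega)⟩

lemma real_add_rpow_le {x y p : ℝ} (hx : 0 ≤ x) (hy : 0 ≤ y) (hp : 1 ≤ p) :
    x ^ p + y ^ p ≤ (x + y) ^ p := by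
  lift x to NNReal using hx
  lift y to NNReal using hy
  have := NNReal.add_rpow_le_rpow_add x y hp
  exact_mod_cast this

lemma sum_rpow_le_rpow_sum {ι : Type*} {p : ℝ} (hp : 1 ≤ p) (s : Finset ι)
    (a : ι → ℝ) (ha : ∀ i ∈ s, 0 ≤ a i) :
    ∑ i ∈ s, a i ^ p ≤ (∑ i ∈ s, a i) ^ p := by
  induction s using Finset.cons_induction with
  | empty => simp [Real.zero_rpow (by positivity : p ≠ 0)]
  | cons i s his ih =>
    rw [Finset.sum_cons, Finset.sum_cons]
    have h1 : 0 ≤ a i := ha i (Finset.mem_cons_self _ _)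
    have h2 : ∀ j ∈ s, 0 ≤ a j := fun j hj => ha j (Finset.mem_cons_of_mem hj)
    have h3 : 0 ≤ ∑ j ∈ s, a j := Finset.sum_nonneg h2
    calc a i ^ p + ∑ j ∈ s, a j ^ p ≤ a i ^ p + (∑ j ∈ s, a j) ^ p := by
          linarith [ih h2]
      _ ≤ (a i + ∑ j ∈ s, a j) ^ p := real_add_rpow_le h1 h3 hp


/-- Let `p ∈ (1,∞)`, let `q ≥ 3`, set `y_{q,2q} = ∑_{n=q}^{2q} (1/n) x_n`, where
`x_n = 2^{-(n-1)} ∑_{j∈M_n} b_j`, and let `D` be the map acting on each block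
`M_n = [2^{n-1}, 2^n) ∩ ℕ` as summation onto the first coordinate.  Then the set
`N = { 2^{n-1} : q ≤ n ≤ 2q }` is admissible and
`‖D y_{q,2q}‖_{B_p} = ∑_{n=q}^{2q} 1/n > 1/2`. -/
theorem stmt_17 (p : ℝ) (hp : 1 < p) (q : ℕ) (hq : 3 ≤ q)
    (D : (ℕ → ℝ) → (ℕ → ℝ))
    (hD : ∀ (x : ℕ → ℝ) (n : ℕ), 1 ≤ n →
      D x (2 ^ (n - 1)) = (∑ j ∈ Mblock n, x j) ∧
      ∀ j ∈ Mblock n, j ≠ 2 ^ (n - 1) → D x j = 0)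
    (y : ℕ → ℝ)
    (hy : y = fun j => ∑ n ∈ Finset.Icc q (2 * q),
      (1 / (n : ℝ)) * (if j ∈ Mblock n then (1 / 2 ^ (n - 1) : ℝ) else 0)) :
    Admissible ((Finset.Icc q (2 * q)).image fun n => 2 ^ (n - 1)) ∧
    BpNorm p (D y) = (∑ n ∈ Finset.Icc q (2 * q), 1 / (n : ℝ)) ∧
    (1 / 2 : ℝ) < ∑ n ∈ Finset.Icc q (2 * q), 1 / (n : ℝ) := by

  classical
  set S : ℝ := ∑ n ∈ Finset.Icc q (2 * q), 1 / (n : ℝ) with hS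
  set N : Finset ℕ := (Finset.Icc q (2 * q)).image fun n => 2 ^ (n - 1) with hN
  -- injectivity of n ↦ 2^(n-1) on Icc q (2q)
  have hinj : ∀ a ∈ Finset.Icc q (2*q), ∀ b ∈ Finset.Icc q (2*q),
      (2:ℕ) ^ (a-1) = 2 ^ (b-1) → a = b := by
    intro a ha b hb hab
    simp only [Finset.mem_Icc] at ha hb
    have := Nat.pow_right_injective (le_refl 2) hab
    omega
  -- admissibility of N
  have hcard : N.card = q + 1 := by
    rw [hN, Finset.card_image_of_injOn hinj, Nat.card_Icc]
    omega
  have hpow_ge : ∀ n, q ≤ n → q + 1 ≤ 2 ^ (n - 1) := by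
    intro n hn
    have h3 : q + 1 ≤ 2 ^ (q - 1) := by
      clear hn hcard hinj hN hS hy
      induction q with
      | zero => omega
      | succ m ih =>
        rcases Nat.lt_or_ge m 3 with h | h
        · interval_cases m <;> simp_all <;> omega
        · have := ih (by omega)
          have h2 : 2 ^ (m - 1) * 2 ≤ 2 ^ (m + 1 - 1) := by
            rw [← pow_succ]
            exact Nat.pow_le_pow_right (by norm_num) (by omega)
          omega
    calc q + 1 ≤ 2 ^ (q-1) := h3
      _ ≤ 2 ^ (n-1) := Nat.pow_le_pow_right (by norm_num) (by omega)
  have hAdm : Admissible N := by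
    constructor
    · exact ⟨2 ^ (q-1), Finset.mem_image.2 ⟨q, Finset.mem_Icc.2 ⟨le_refl _, by omega⟩, rfl⟩⟩
    · intro k hk
      rcases Finset.mem_image.1 hk with ⟨n, hn, rfl⟩
      rw [hcard]
      exact hpow_ge n (Finset.mem_Icc.1 hn).1
  -- values of y
  have hyval : ∀ n ∈ Finset.Icc q (2*q), ∀ i ∈ Mblock n,
      y i = 1 / ((n : ℝ) * 2 ^ (n-1)) := by
    intro n hn i hi
    have hn1 : 1 ≤ n := by have := (Finset.mem_Icc.1 hn).1; omega
    rw [hy]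
    simp only
    rw [Finset.sum_eq_single n]
    · rw [if_pos hi]
      rw [one_div_mul_one_div]
    · intro m hm hmn
      have hm1 : 1 ≤ m := by have := (Finset.mem_Icc.1 hm).1; omega
      rw [if_neg, mul_zero]
      intro hcon
      exact hmn (mblock_unique hm1 hn1 hcon hi)
    · intro hcon; exact absurd hn hcon
  have hyzero : ∀ m, 1 ≤ m → m ∉ Finset.Icc q (2*q) → ∀ i ∈ Mblock m, y i = 0 := by
    intro m hm1 hm i hi
    rw [hy]
    simp only
    apply Finset.sum_eq_zero
    intro n hn
    have hn1 : 1 ≤ n := by have := (Finset.mem_Icc.1 hn).1; omega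
    rw [if_neg, mul_zero]
    intro hcon
    exact hm ((mblock_unique hm1 hn1 hi hcon) ▸ hn)
  -- value of D y at 2^(n-1), n in range
  have hf1 : ∀ n ∈ Finset.Icc q (2*q), D y (2 ^ (n-1)) = 1 / (n : ℝ) := by
    intro n hn
    have hn1 : 1 ≤ n := by have := (Finset.mem_Icc.1 hn).1; omega
    rw [(hD y n hn1).1]
    rw [Finset.sum_congr rfl (fun i hi => hyval n hn i hi)]
    rw [Finset.sum_const]
    have hcardM : (Mblock n).card = 2 ^ (n-1) := by
      rw [Mblock, Nat.card_Ico]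
      have : (2:ℕ)^n = 2 * 2^(n-1) := by
        rw [← pow_succ']
        congr 1
        omega
      omega
    rw [hcardM]
    have hne : ((n:ℝ)) ≠ 0 := by
      have : (0:ℕ) < n := hn1
      exact_mod_cast this.ne'
    have hpne : ((2:ℝ) ^ (n-1)) ≠ 0 := by positivity
    rw [nsmul_eq_mul]
    push_cast
    field_simp
  -- D y vanishes off N (for indices ≥ 1)
  have hf0 : ∀ j, 1 ≤ j → j ∉ N → D y j = 0 := by
    intro j hj hjN
    set m := Nat.log 2 j + 1 with hm
    have hm1 : 1 ≤ m := by omega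
    have hjm : j ∈ Mblock m := mem_mblock_log hj
    by_cases hje : j = 2 ^ (m - 1)
    · rw [hje, (hD y m hm1).1]
      apply Finset.sum_eq_zero
      intro i hi
      apply hyzero m hm1 _ i hi
      intro hcon
      exact hjN (Finset.mem_image.2 ⟨m, hcon, hje.symm⟩)
    · exact (hD y m hm1).2 j hjm hje
  -- mu of D y on N
  have hmuN : mu (D y) N = S := by
    rw [mu, hN, Finset.sum_image hinj, hS]
    apply Finset.sum_congr rfl
    intro n hn
    rw [hf1 n hn, abs_of_nonneg]
    positivity
  have hS0 : 0 ≤ S := by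
    rw [hS]; positivity
  have hp0 : p ≠ 0 := by positivity
  -- S is attained
  have hmem : S ∈ { t : ℝ | ∃ (k : ℕ) (Nf : Fin k → Finset ℕ), 0 < k ∧
      (∀ j, Admissible (Nf j)) ∧ SepChain Nf ∧
      t = (∑ j, (mu (D y) (Nf j)) ^ p) ^ (1 / p) } := by
    refine ⟨1, fun _ => N, one_pos, fun _ => hAdm, ?_, ?_⟩
    · intro i j hij _ _ _ _
      exact absurd hij (by omega)
    · rw [Fin.sum_univ_one, hmuN, one_div, Real.rpow_rpow_inv hS0 hp0]
  -- upper bound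
  have hub : ∀ t ∈ { t : ℝ | ∃ (k : ℕ) (Nf : Fin k → Finset ℕ), 0 < k ∧
      (∀ j, Admissible (Nf j)) ∧ SepChain Nf ∧
      t = (∑ j, (mu (D y) (Nf j)) ^ p) ^ (1 / p) }, t ≤ S := by
    rintro t ⟨k, Nf, hk, hadm, hsep, rfl⟩
    have hmu_nonneg : ∀ j : Fin k, 0 ≤ mu (D y) (Nf j) := by
      intro j
      exact Finset.sum_nonneg fun i _ => abs_nonneg _
    have step1 : ∑ j, (mu (D y) (Nf j)) ^ p ≤ (∑ j, mu (D y) (Nf j)) ^ p :=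
      sum_rpow_le_rpow_sum hp.le _ _ (fun j _ => hmu_nonneg j)
    have step2 : (∑ j, (mu (D y) (Nf j)) ^ p) ^ (1/p) ≤ ∑ j, mu (D y) (Nf j) := by
      calc (∑ j, (mu (D y) (Nf j)) ^ p) ^ (1/p)
          ≤ ((∑ j, mu (D y) (Nf j)) ^ p) ^ (1/p) := by
            apply Real.rpow_le_rpow _ step1 (by positivity)
            exact Finset.sum_nonneg fun j _ => Real.rpow_nonneg (hmu_nonneg j) p
        _ = ∑ j, mu (D y) (Nf j) := by
            rw [one_div, Real.rpow_rpow_inv (Finset.sum_nonneg fun j _ => hmu_nonneg j) hp0]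
    refine step2.trans ?_
    -- disjointness
    have hdisj : ((Finset.univ : Finset (Fin k)) : Set (Fin k)).PairwiseDisjoint Nf := by
      intro i _ j _ hij
      rcases lt_or_gt_of_ne hij with h | h
      · exact Finset.disjoint_left.2 fun a ha hb =>
          lt_irrefl a (hsep i j h a ha a hb)
      · exact Finset.disjoint_left.2 fun a ha hb =>
          lt_irrefl a (hsep j i h a hb a ha)
    have hsum : ∑ j, mu (D y) (Nf j) = ∑ i ∈ Finset.univ.biUnion Nf, |D y i| := by
      rw [Finset.sum_biUnion hdisj]
      rfl
    rw [hsum]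
    set U := Finset.univ.biUnion Nf with hU
    have hU1 : ∀ i ∈ U, 1 ≤ i := by
      intro i hi
      rcases Finset.mem_biUnion.1 hi with ⟨j, _, hij⟩
      have h1 := (hadm j).2 i hij
      have h2 : 0 < (Nf j).card := Finset.card_pos.2 (hadm j).1
      omega
    have heq : ∑ i ∈ U, |D y i| = ∑ i ∈ U ∩ N, |D y i| := by
      symm
      apply Finset.sum_subset (Finset.inter_subset_left)
      intro i hi hni
      have : i ∉ N := fun hcon => hni (Finset.mem_inter.2 ⟨hi, hcon⟩)
      rw [hf0 i (hU1 i hi) this, abs_zero]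
    rw [heq, ← hmuN, mu]
    exact Finset.sum_le_sum_of_subset_of_nonneg (Finset.inter_subset_right)
      (fun i _ _ => abs_nonneg _)
  have hBp : BpNorm p (D y) = S := by
    rw [BpNorm]
    exact le_antisymm (csSup_le ⟨S, hmem⟩ hub) (le_csSup ⟨S, hub⟩ hmem)
  refine ⟨hAdm, hBp, ?_⟩
  -- 1/2 < S
  have hq1 : (0:ℝ) < q := by exact_mod_cast (by omega : 0 < q)
  have hlow : ((q:ℝ) + 1) / (2 * q) ≤ S := by
    rw [hS]
    have : ∀ n ∈ Finset.Icc q (2*q), 1 / (2*(q:ℝ)) ≤ 1 / (n:ℝ) := by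
      intro n hn
      rcases Finset.mem_Icc.1 hn with ⟨h1, h2⟩
      apply one_div_le_one_div_of_le
      · have : (0:ℕ) < n := by omega
        exact_mod_cast this
      · exact_mod_cast h2
    calc ((q:ℝ) + 1) / (2 * q) = ∑ _n ∈ Finset.Icc q (2*q), 1 / (2*(q:ℝ)) := by
          rw [Finset.sum_const, Nat.card_Icc]
          have : (2*q + 1 - q : ℕ) = q + 1 := by omega
          rw [this, nsmul_eq_mul]
          push_cast
          field_simp
      _ ≤ _ := Finset.sum_le_sum this
  have : (1/2 : ℝ) < ((q:ℝ) + 1) / (2 * q) := by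
    rw [div_lt_div_iff₀ (by norm_num) (by positivity)]
    ring_nf
    linarith
  linarith
end
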